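/- The variance of the truncated distribution of X given X ≤ t is at most the variance of X, for X normally distributed: Var(X | X ≤ t) ≤ Var(X) for every t ∈ ℝ. -/

import Mathlib

open MeasureTheory ProbabilityTheory Real Filter Set

variable {μ : ℝ} {v : NNReal}


lemma hasDerivAt_gpdf (hv : v ≠ 0) (x : ℝ) :
    HasDerivAt (gaussianPDFReal μ v) (-((x - μ)/v) * gaussianPDFReal μ v x) x := by
  have hv' : (0:ℝ) < v := lt_of_le_of_ne v.coe_nonneg (by exact_mod_cast (Ne.symm hv))
  have h1 : HasDerivAt (fun x : ℝ => x - μ) 1 x := (hasDerivAt_id x).sub_const μ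
  have h2 : HasDerivAt (fun x : ℝ => (x - μ)^2) (2 * (x-μ)^1 * 1) x := h1.pow 2
  have h3 : HasDerivAt (fun x : ℝ => -(x - μ)^2 / (2*v))
      (-(2 * (x-μ)^1 * 1) / (2*v)) x := (h2.neg).div_const _
  have h4 := (h3.exp).const_mul (√(2 * Real.pi * v))⁻¹
  have : HasDerivAt (gaussianPDFReal μ v)
      ((√(2 * Real.pi * v))⁻¹ * (Real.exp (-(x - μ)^2 / (2*v)) * (-(2 * (x-μ)^1 * 1) / (2*v)))) x := h4
  convert this using 1
  unfold gaussianPDFReal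
  field_simp


lemma gpdf_eq (hv : v ≠ 0) (x : ℝ) :
    gaussianPDFReal μ v x = (√(2 * Real.pi * v))⁻¹ * Real.exp (-(2*(v:ℝ))⁻¹ * (x - μ)^2) := by
  unfold gaussianPDFReal
  rw [neg_div, div_eq_inv_mul, neg_mul]

lemma integrable_mul_gpdf (hv : v ≠ 0) :
    Integrable (fun x : ℝ => (x - μ) * gaussianPDFReal μ v x) := by
  have hv' : (0:ℝ) < v := lt_of_le_of_ne v.coe_nonneg (by exact_mod_cast (Ne.symm hv))
  have hb : (0:ℝ) < (2*(v:ℝ))⁻¹ := by positivity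
  have h := ((integrable_mul_exp_neg_mul_sq hb).comp_sub_right μ).const_mul (√(2 * Real.pi * v))⁻¹
  refine h.congr (Filter.Eventually.of_forall fun x => ?_)
  simp only [gpdf_eq hv]
  ring

lemma integrable_sq_mul_gpdf (hv : v ≠ 0) :
    Integrable (fun x : ℝ => (x - μ)^2 * gaussianPDFReal μ v x) := by
  have hv' : (0:ℝ) < v := lt_of_le_of_ne v.coe_nonneg (by exact_mod_cast (Ne.symm hv))
  have hb : (0:ℝ) < (2*(v:ℝ))⁻¹ := by positivity
  have hpow : ∀ y : ℝ, y ^ ((2:ℕ):ℝ) = y ^ (2:ℕ) := fun y => Real.rpow_natCast y 2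
  have base : Integrable (fun y : ℝ => y^2 * Real.exp (-(2*(v:ℝ))⁻¹ * y^2)) := by
    have := integrable_rpow_mul_exp_neg_mul_sq hb (s := ((2:ℕ):ℝ)) (by norm_num)
    refine this.congr (Filter.Eventually.of_forall fun x => ?_)
    simp only [hpow]
  have h := (base.comp_sub_right μ).const_mul (√(2 * Real.pi * v))⁻¹
  refine h.congr (Filter.Eventually.of_forall fun x => ?_)
  simp only [gpdf_eq hv]
  ring

lemma tendsto_mul_exp_sq_atTop {b : ℝ} (hb : 0 < b) :
    Tendsto (fun y : ℝ => y * Real.exp (-b * y^2)) atTop (nhds 0) := by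
  have h := rpow_mul_exp_neg_mul_sq_isLittleO_exp_neg hb 1
  simp_rw [Real.rpow_one] at h
  refine h.trans_tendsto ?_
  have : Tendsto (fun x : ℝ => -(1/2) * x) atTop atBot := by
    rw [show (fun x : ℝ => -(1/2) * x) = fun x : ℝ => -((1/2) * x) by funext x; ring]
    exact tendsto_neg_atTop_atBot.comp
      ((tendsto_const_mul_atTop_of_pos (by norm_num : (0:ℝ) < 1/2)).mpr tendsto_id)
  exact Real.tendsto_exp_atBot.comp this

lemma tendsto_gpdf_atBot (hv : v ≠ 0) :
    Tendsto (gaussianPDFReal μ v) atBot (nhds 0) := by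
  have hv' : (0:ℝ) < v := lt_of_le_of_ne v.coe_nonneg (by exact_mod_cast (Ne.symm hv))
  have hb : (0:ℝ) < (2*(v:ℝ))⁻¹ := by positivity
  have h1 : Tendsto (fun y : ℝ => y^2) atBot atTop := by
    have := (tendsto_pow_atTop (two_ne_zero)).comp tendsto_neg_atBot_atTop (α := ℝ)
    refine this.congr fun y => ?_
    simp [neg_sq]
  have h2 : Tendsto (fun y : ℝ => -(2*(v:ℝ))⁻¹ * y^2) atBot atBot := by
    rw [show (fun y : ℝ => -(2*(v:ℝ))⁻¹ * y^2) = fun y : ℝ => -((2*(v:ℝ))⁻¹ * y^2) by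
      funext y; ring]
    exact tendsto_neg_atTop_atBot.comp ((tendsto_const_mul_atTop_of_pos hb).mpr h1)
  have h3 : Tendsto (fun y : ℝ => Real.exp (-(2*(v:ℝ))⁻¹ * y^2)) atBot (nhds 0) :=
    Real.tendsto_exp_atBot.comp h2
  have h4 := (h3.const_mul (√(2 * Real.pi * v))⁻¹).comp
    (tendsto_atBot_add_const_right atBot (-μ) tendsto_id)
  rw [mul_zero] at h4
  refine h4.congr fun x => ?_
  simp only [Function.comp, id_eq, gpdf_eq hv]
  ring_nf

lemma tendsto_mul_gpdf_atBot (hv : v ≠ 0) :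
    Tendsto (fun x : ℝ => (x - μ) * gaussianPDFReal μ v x) atBot (nhds 0) := by
  have hv' : (0:ℝ) < v := lt_of_le_of_ne v.coe_nonneg (by exact_mod_cast (Ne.symm hv))
  have hb : (0:ℝ) < (2*(v:ℝ))⁻¹ := by positivity
  have hT := tendsto_mul_exp_sq_atTop hb
  have hB : Tendsto (fun y : ℝ => y * Real.exp (-(2*(v:ℝ))⁻¹ * y^2)) atBot (nhds 0) := by
    have := (hT.neg.comp tendsto_neg_atBot_atTop)
    rw [neg_zero] at this
    refine this.congr fun y => ?_
    simp only [Function.comp, neg_sq]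
    ring
  have h4 := (hB.const_mul (√(2 * Real.pi * v))⁻¹).comp
    (tendsto_atBot_add_const_right atBot (-μ) tendsto_id)
  rw [mul_zero] at h4
  refine h4.congr fun x => ?_
  simp only [Function.comp, id_eq, gpdf_eq hv]
  ring_nf




lemma integral_Iic_mul_gpdf (hv : v ≠ 0) (t : ℝ) :
    ∫ x in Iic t, (x - μ) * gaussianPDFReal μ v x
      = -(v:ℝ) * gaussianPDFReal μ v t := by
  have hv' : (0:ℝ) < v := lt_of_le_of_ne v.coe_nonneg (by exact_mod_cast (Ne.symm hv))
  have hder : ∀ x ∈ Iic t, HasDerivAt (fun x => -(v:ℝ) * gaussianPDFReal μ v x)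
      ((x - μ) * gaussianPDFReal μ v x) x := by
    intro x _
    have h := (hasDerivAt_gpdf (μ := μ) hv x).const_mul (-(v:ℝ))
    convert h using 1
    · rfl
    · rfl
    field_simp
  have h := integral_Iic_of_hasDerivAt_of_tendsto' hder
      (integrable_mul_gpdf hv).integrableOn
      (by simpa using (tendsto_gpdf_atBot (μ := μ) hv).const_mul (-(v:ℝ)))
  simpa using h

lemma integral_Iic_sq_mul_gpdf (hv : v ≠ 0) (t : ℝ) :
    ∫ x in Iic t, (x - μ)^2 * gaussianPDFReal μ v x
      = (v:ℝ) * (∫ x in Iic t, gaussianPDFReal μ v x)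
        - (v:ℝ) * (t - μ) * gaussianPDFReal μ v t := by
  have hv' : (0:ℝ) < v := lt_of_le_of_ne v.coe_nonneg (by exact_mod_cast (Ne.symm hv))
  have hder : ∀ x ∈ Iic t, HasDerivAt (fun x => -(v:ℝ) * ((x - μ) * gaussianPDFReal μ v x))
      ((x - μ)^2 * gaussianPDFReal μ v x - (v:ℝ) * gaussianPDFReal μ v x) x := by
    intro x _
    have h1 : HasDerivAt (fun x : ℝ => (x - μ) * gaussianPDFReal μ v x)
        (1 * gaussianPDFReal μ v x
          + (x - μ) * (-((x - μ)/v) * gaussianPDFReal μ v x)) x :=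
      ((hasDerivAt_id x).sub_const μ).mul (hasDerivAt_gpdf (μ := μ) hv x)
    have h2 := h1.const_mul (-(v:ℝ))
    convert h2 using 1
    · rfl
    · rfl
    field_simp
    ring
  have key := integral_Iic_of_hasDerivAt_of_tendsto' hder
      (((integrable_sq_mul_gpdf hv).sub
        ((integrable_gaussianPDFReal μ v).const_mul (v:ℝ))).integrableOn)
      (by simpa using (tendsto_mul_gpdf_atBot (μ := μ) hv).const_mul (-(v:ℝ)))
  rw [integral_sub (integrable_sq_mul_gpdf hv).integrableOn
      (((integrable_gaussianPDFReal μ v).const_mul (v:ℝ)).integrableOn),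
    integral_const_mul _ _] at key
  simp only [sub_zero] at key
  linarith [key]

lemma integral_Iic_gpdf_pos (hv : v ≠ 0) (t : ℝ) :
    0 < ∫ x in Iic t, gaussianPDFReal μ v x := by
  rw [setIntegral_pos_iff_support_of_nonneg_ae
      (Filter.Eventually.of_forall fun x => gaussianPDFReal_nonneg μ v x)
      (integrable_gaussianPDFReal μ v).integrableOn]
  have hsupp : Function.support (gaussianPDFReal μ v) ∩ Iic t = Iic t := by
    refine inter_eq_right.mpr fun x _ => ?_
    exact (gaussianPDFReal_pos μ v x hv).ne'
  rw [hsupp, Real.volume_Iic]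
  simp

lemma mills (hv : v ≠ 0) (t : ℝ) :
    0 ≤ (t - μ) * (∫ x in Iic t, gaussianPDFReal μ v x)
      + (v:ℝ) * gaussianPDFReal μ v t := by
  rcases le_or_gt μ t with h | h
  · have := (integral_Iic_gpdf_pos (μ := μ) hv t).le
    have := gaussianPDFReal_nonneg μ v t
    have := v.coe_nonneg
    nlinarith
  · have hA : ∫ x in Iic t, (μ - x) * gaussianPDFReal μ v x = (v:ℝ) * gaussianPDFReal μ v t := by
      have h1 := integral_Iic_mul_gpdf (μ := μ) hv t
      have h2 : ∫ x in Iic t, (μ - x) * gaussianPDFReal μ v x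
          = - ∫ x in Iic t, (x - μ) * gaussianPDFReal μ v x := by
        rw [← integral_neg]
        refine setIntegral_congr_fun measurableSet_Iic fun x _ => ?_
        ring
      rw [h2, h1]; ring
    have hcomp : (μ - t) * (∫ x in Iic t, gaussianPDFReal μ v x)
        ≤ (v:ℝ) * gaussianPDFReal μ v t := by
      rw [← hA, ← integral_const_mul _ _]
      refine setIntegral_mono_on
        (((integrable_gaussianPDFReal μ v).const_mul (μ - t)).integrableOn)
        ?_ measurableSet_Iic fun x hx => ?_
      · have : Integrable (fun x : ℝ => (μ - x) * gaussianPDFReal μ v x) := by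
          have := (integrable_mul_gpdf (μ := μ) hv).neg
          refine this.congr (Filter.Eventually.of_forall fun x => ?_)
          simp only [Pi.neg_apply]
          ring
        exact this.integrableOn
      · exact mul_le_mul_of_nonneg_right (by simp only [mem_Iic] at hx; linarith) (gaussianPDFReal_nonneg μ v x)
    linarith




lemma setIntegral_Iic_gaussianReal (hv : v ≠ 0) (t : ℝ) (g : ℝ → ℝ) :
    ∫ x in Iic t, g x ∂(gaussianReal μ v)
      = ∫ x in Iic t, gaussianPDFReal μ v x * g x := by
  rw [gaussianReal_of_var_ne_zero _ hv]
  have : (gaussianPDF μ v) = fun x => ((Real.toNNReal (gaussianPDFReal μ v x) : NNReal) : ENNReal) :=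
    rfl
  rw [this, setIntegral_withDensity_eq_setIntegral_smul
      (measurable_gaussianPDFReal μ v).real_toNNReal g measurableSet_Iic]
  refine integral_congr_ae (Filter.Eventually.of_forall fun x => ?_)
  simp only [NNReal.smul_def, smul_eq_mul, Real.coe_toNNReal _ (gaussianPDFReal_nonneg μ v x)]

/-- One-sided truncation of a Gaussian reduces variance: for `X ~ N(μ,σ²)`,
`Var(X | X ≤ t) ≤ σ²` for every `t ∈ ℝ`. -/
theorem truncated_gaussian_variance_le (μ : ℝ) (v : NNReal) (hv : v ≠ 0) (t : ℝ) :
    (∫ x in Set.Iic t,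
        (x - (∫ y in Set.Iic t, y ∂gaussianReal μ v)
              / ((gaussianReal μ v) (Set.Iic t)).toReal) ^ 2 ∂gaussianReal μ v)
      / ((gaussianReal μ v) (Set.Iic t)).toReal ≤ (v : ℝ) := by
  have hv' : (0:ℝ) < v := lt_of_le_of_ne v.coe_nonneg (by exact_mod_cast (Ne.symm hv))
  set F : ℝ := ∫ x in Iic t, gaussianPDFReal μ v x with hFdef
  have hFpos : 0 < F := integral_Iic_gpdf_pos hv t
  have hmeas : ((gaussianReal μ v) (Iic t)).toReal = F := by
    rw [gaussianReal_apply_eq_integral _ hv,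
      ENNReal.toReal_ofReal (integral_nonneg fun x => gaussianPDFReal_nonneg μ v x)]
  set A : ℝ := -(v:ℝ) * gaussianPDFReal μ v t with hAdef
  set B : ℝ := (v:ℝ) * F - (v:ℝ) * (t - μ) * gaussianPDFReal μ v t with hBdef
  have hM : (∫ y in Iic t, y ∂gaussianReal μ v) = A + μ * F := by
    rw [setIntegral_Iic_gaussianReal hv t]
    have : ∫ y in Iic t, gaussianPDFReal μ v y * y
        = ∫ y in Iic t, ((y - μ) * gaussianPDFReal μ v y + μ * gaussianPDFReal μ v y) := by
      refine integral_congr_ae (Filter.Eventually.of_forall fun y => ?_)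
      ring
    rw [this, integral_add (integrable_mul_gpdf hv).integrableOn
        (((integrable_gaussianPDFReal μ v).const_mul μ).integrableOn),
      integral_const_mul, integral_Iic_mul_gpdf hv t]
  set q : ℝ := (A + μ * F) / F with hqdef
  rw [hmeas, hM]
  rw [setIntegral_Iic_gaussianReal hv t]
  have hexp : ∫ x in Iic t, gaussianPDFReal μ v x * (x - q)^2
      = B + 2*(μ - q)*A + (μ - q)^2 * F := by
    have h1 : ∫ x in Iic t, gaussianPDFReal μ v x * (x - q)^2
        = ∫ x in Iic t, ((x - μ)^2 * gaussianPDFReal μ v x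
            + ((2*(μ - q)) * ((x - μ) * gaussianPDFReal μ v x) + (μ - q)^2 * gaussianPDFReal μ v x)) := by
      refine integral_congr_ae (Filter.Eventually.of_forall fun x => ?_)
      ring
    have hI3 : Integrable (fun x : ℝ => 2*(μ - q)*((x - μ) * gaussianPDFReal μ v x)
        + (μ - q)^2 * gaussianPDFReal μ v x) (volume.restrict (Iic t)) :=
      (((integrable_mul_gpdf hv).const_mul (2*(μ - q))).integrableOn).add
        (((integrable_gaussianPDFReal μ v).const_mul ((μ - q)^2)).integrableOn)
    rw [h1, integral_add (integrable_sq_mul_gpdf hv).integrableOn hI3,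
      integral_add ((integrable_mul_gpdf hv).const_mul (2*(μ - q))).integrableOn
        ((integrable_gaussianPDFReal μ v).const_mul ((μ - q)^2)).integrableOn,
      integral_const_mul, integral_const_mul, integral_Iic_mul_gpdf hv t,
      integral_Iic_sq_mul_gpdf hv t, ← hFdef]
    ring
  rw [hexp]
  have hq : μ - q = -(A / F) := by
    rw [hqdef]; field_simp; ring
  have hexp2 : B + 2*(μ - q)*A + (μ - q)^2 * F = B - A^2 / F := by
    rw [hq]; field_simp; ring
  have hMills : 0 ≤ (t - μ) * F + (v:ℝ) * gaussianPDFReal μ v t := by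
    have := mills (μ := μ) hv t
    rw [← hFdef] at this
    exact this
  have hφt : 0 ≤ gaussianPDFReal μ v t := gaussianPDFReal_nonneg μ v t
  have key : 0 ≤ (v:ℝ) * gaussianPDFReal μ v t * ((t - μ) * F + (v:ℝ) * gaussianPDFReal μ v t) :=
    mul_nonneg (mul_nonneg hv'.le hφt) hMills
  rw [hexp2, show B - A^2/F = (B*F - A^2)/F from by field_simp, div_le_iff₀ hFpos,
    div_le_iff₀ hFpos, hAdef, hBdef]
  nlinarith [key]
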